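/- Blurring mean-shift convergence theorem: if f is PDD and the weights w_j > 0 are fixed (depending only on the point index j), then for the blurring mean-shift update there exist limit points x_1*, ..., x_N* such that x_i^{(t)} → x_i* as t → ∞ for every i. -/

import Mathlib

open Filter

section BMSAux

open Finset RealInnerProductSpace

variable {p N : ℕ}


lemma geom_tail {r : ℝ} (h0 : 0 ≤ r) (h1 : r < 1) (M : ℕ) :
    ∑ j ∈ range M, r^j ≤ (1 - r)⁻¹ := by
  have h3 : (0:ℝ) < 1 - r := by linarith
  have h4 : (1 - r) * ∑ j ∈ range M, r^j = 1 - r^M := by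
    nlinarith [geom_sum_mul r M]
  have h5 : (0:ℝ) ≤ r^M := pow_nonneg h0 M
  rw [inv_eq_one_div, le_div_iff₀ h3]
  nlinarith

lemma bms_gap {N m : ℕ} (a : Fin N → Fin N → ℝ) {δ K R : ℝ}
    (hδ : 0 < δ) (hK : 1 ≤ K) (hR : R = K + 1 + 1/δ)
    (ha0 : ∀ i j, 0 ≤ a i j) (harow : ∀ i, ∑ j, a i j = 1)
    (hdiag : ∀ i, δ ≤ a i i) (hsym : ∀ i j, a j i ≤ K * a i j)
    (q : Fin m → Fin N) (hq : Function.Injective q) (g : ℕ) (hg : g + 1 < N) :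
    ∑ k ∈ univ.filter (fun k : Fin m => g < (k:ℕ)),
        (R⁻¹)^((k:ℕ)+1) * (∑ j ∈ univ.filter (fun j : Fin N => (j:ℕ) ≤ g), a (q k) j)
      ≤ ∑ k ∈ univ.filter (fun k : Fin m => (k:ℕ) ≤ g),
        (R⁻¹)^((k:ℕ)+1) * (∑ j ∈ univ.filter (fun j : Fin N => g < (j:ℕ)), a (q k) j) := by
  have hK0 : (0:ℝ) < K := lt_of_lt_of_le one_pos hK
  have hR1 : (1:ℝ) < R := by
    have : 0 < 1/δ := by positivity
    rw [hR]; linarith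
  have hR0 : (0:ℝ) < R := lt_trans one_pos hR1
  have hr0 : (0:ℝ) < R⁻¹ := inv_pos.mpr hR0
  have hr1 : R⁻¹ < 1 := by rw [inv_lt_one_iff₀]; right; exact hR1
  set B : Finset (Fin N) := univ.filter (fun j : Fin N => (j:ℕ) ≤ g) with hB
  set Bc : Finset (Fin N) := univ.filter (fun j : Fin N => g < (j:ℕ)) with hBc
  set lo : Fin N → ℝ := fun s => ∑ j ∈ B, a s j with hlo
  set hi : Fin N → ℝ := fun s => ∑ j ∈ Bc, a s j with hhi
  have hlo0 : ∀ s, 0 ≤ lo s := fun s => sum_nonneg (fun j _ => ha0 s j)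
  have hhi0 : ∀ s, 0 ≤ hi s := fun s => sum_nonneg (fun j _ => ha0 s j)
  have hlo1 : ∀ s, lo s ≤ 1 := by
    intro s
    rw [← harow s]
    exact sum_le_sum_of_subset_of_nonneg (subset_univ B) (fun j _ _ => ha0 s j)
  set Klow : Finset (Fin m) := univ.filter (fun k : Fin m => (k:ℕ) ≤ g) with hKlow
  set Khi : Finset (Fin m) := univ.filter (fun k : Fin m => g < (k:ℕ)) with hKhi
  -- pointwise coefficient bounds
  have hcoefflow : ∀ k ∈ Klow, (R⁻¹)^(g+1) ≤ (R⁻¹)^((k:ℕ)+1) := by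
    intro k hk
    rw [hKlow, mem_filter] at hk
    exact pow_le_pow_of_le_one (le_of_lt hr0) (le_of_lt hr1) (by omega)
  have hcoeffhi : ∀ k ∈ Khi, (R⁻¹)^((k:ℕ)+1) ≤ (R⁻¹)^(g+2) := by
    intro k hk
    rw [hKhi, mem_filter] at hk
    exact pow_le_pow_of_le_one (le_of_lt hr0) (le_of_lt hr1) (by omega)
  -- the generic tail bound
  have tail2 : ∑ n ∈ Finset.Ico (g+1) m, (R⁻¹)^(n+1) ≤ (R⁻¹)^(g+1) * (R-1)⁻¹ := by
    rw [Finset.sum_Ico_eq_sum_range]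
    have e1 : ∀ j ∈ range (m - (g+1)), (R⁻¹)^((g+1+j)+1) = (R⁻¹)^(g+2) * (R⁻¹)^j := by
      intro j _; ring
    rw [sum_congr rfl e1, ← mul_sum]
    have e2 : (R⁻¹)^(g+2) * (1 - R⁻¹)⁻¹ = (R⁻¹)^(g+1) * (R-1)⁻¹ := by
      have hRne : R ≠ 0 := ne_of_gt hR0
      have h3 : (1 - R⁻¹) = (R-1)/R := by field_simp
      rw [h3]
      have hR1ne : R - 1 ≠ 0 := by intro h; rw [sub_eq_zero] at h; exact (ne_of_lt hR1) h.symm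
      rw [pow_succ]
      field_simp
    calc (R⁻¹)^(g+2) * ∑ j ∈ range (m-(g+1)), (R⁻¹)^j
        ≤ (R⁻¹)^(g+2) * (1 - R⁻¹)⁻¹ := by
          apply mul_le_mul_of_nonneg_left (geom_tail (le_of_lt hr0) hr1 _) (by positivity)
      _ = (R⁻¹)^(g+1) * (R-1)⁻¹ := e2
  have tail1 : ∑ k ∈ Khi, (R⁻¹)^((k:ℕ)+1) * lo (q k) ≤ (R⁻¹)^(g+1) * (R-1)⁻¹ := by
    calc ∑ k ∈ Khi, (R⁻¹)^((k:ℕ)+1) * lo (q k)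
        ≤ ∑ k ∈ Khi, (R⁻¹)^((k:ℕ)+1) := by
          apply sum_le_sum
          intro k _
          nth_rewrite 2 [← mul_one ((R⁻¹)^((k:ℕ)+1))]
          exact mul_le_mul_of_nonneg_left (hlo1 (q k)) (by positivity)
      _ = ∑ n ∈ Khi.image (fun k : Fin m => (k:ℕ)), (R⁻¹)^(n+1) := by
          rw [sum_image]
          intro x _ y _ h
          exact Fin.ext h
      _ ≤ ∑ n ∈ Finset.Ico (g+1) m, (R⁻¹)^(n+1) := by
          apply sum_le_sum_of_subset_of_nonneg
          · intro n hn
            simp only [mem_image, hKhi, mem_filter, mem_univ, true_and] at hn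
            obtain ⟨k, hk1, hk2⟩ := hn
            rw [Finset.mem_Ico]
            subst hk2
            exact ⟨by omega, k.isLt⟩
          · intro n _ _; positivity
      _ ≤ (R⁻¹)^(g+1) * (R-1)⁻¹ := tail2
  have hRinv : (R - 1)⁻¹ ≤ δ := by
    have h1 : 1/δ ≤ R - 1 := by rw [hR]; linarith
    have h2 : (0:ℝ) < 1/δ := by positivity
    calc (R-1)⁻¹ ≤ (1/δ)⁻¹ := by
          apply inv_anti₀ h2 h1
      _ = δ := by field_simp
  by_cases hcase : ∀ k : Fin m, (k:ℕ) ≤ g → (q k : ℕ) ≤ g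
  · -- case (iii): bottom positions all map into B
    by_cases hne : ∃ k : Fin m, g < (k:ℕ)
    · obtain ⟨kw, hkw⟩ := hne
      have hgm : g + 1 ≤ m := by have := kw.isLt; omega
      -- cardinalities
      have hcardKlow : Klow.card = g + 1 := by
        have himv : Klow.image (fun k : Fin m => (k:ℕ)) = range (g+1) := by
          ext n
          simp only [mem_image, hKlow, mem_filter, mem_univ, true_and, mem_range]
          constructor
          · rintro ⟨k, hk, rfl⟩; omega
          · intro hn; exact ⟨⟨n, by omega⟩, by simpa using (by omega : n ≤ g), rfl⟩
        have := Finset.card_image_of_injective Klow (Fin.val_injective (n := m))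
        rw [himv, Finset.card_range] at this
        omega
      have hcardB : B.card = g + 1 := by
        have himv : B.image (fun j : Fin N => (j:ℕ)) = range (g+1) := by
          ext n
          simp only [mem_image, hB, mem_filter, mem_univ, true_and, mem_range]
          constructor
          · rintro ⟨k, hk, rfl⟩; omega
          · intro hn; exact ⟨⟨n, by omega⟩, by simpa using (by omega : n ≤ g), rfl⟩
        have := Finset.card_image_of_injective B (Fin.val_injective (n := N))
        rw [himv, Finset.card_range] at this
        omega
      have himage : Klow.image q = B := by
        apply Finset.eq_of_subset_of_card_le
        · intro j hj
          simp only [mem_image, hKlow, mem_filter, mem_univ, true_and] at hj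
          obtain ⟨k, hk, rfl⟩ := hj
          rw [hB, mem_filter]
          exact ⟨mem_univ _, hcase k hk⟩
        · rw [Finset.card_image_of_injective Klow hq, hcardKlow, hcardB]
      have hout : ∀ k ∈ Khi, g < (q k : ℕ) := by
        intro k hk
        rw [hKhi, mem_filter] at hk
        by_contra hcon
        push_neg at hcon
        have : q k ∈ B := by rw [hB, mem_filter]; exact ⟨mem_univ _, hcon⟩
        rw [← himage, mem_image] at this
        obtain ⟨k', hk', he⟩ := this
        rw [hKlow, mem_filter] at hk'
        have := hq he
        omega
      set X : ℝ := ∑ l ∈ Bc, lo l with hX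
      have hX0 : 0 ≤ X := sum_nonneg (fun l _ => hlo0 l)
      have hXbound : X ≤ K * ∑ j ∈ B, hi j := by
        rw [hX]
        simp only [hlo, hhi]
        rw [Finset.sum_comm]
        rw [Finset.mul_sum]
        apply sum_le_sum
        intro j _
        rw [Finset.mul_sum]
        apply sum_le_sum
        intro l _
        exact hsym j l
      calc ∑ k ∈ Khi, (R⁻¹)^((k:ℕ)+1) * lo (q k)
          ≤ ∑ k ∈ Khi, (R⁻¹)^(g+2) * lo (q k) := by
            apply sum_le_sum
            intro k hk
            exact mul_le_mul_of_nonneg_right (hcoeffhi k hk) (hlo0 _)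
        _ = (R⁻¹)^(g+2) * ∑ k ∈ Khi, lo (q k) := by rw [mul_sum]
        _ ≤ (R⁻¹)^(g+2) * X := by
            apply mul_le_mul_of_nonneg_left _ (by positivity)
            calc ∑ k ∈ Khi, lo (q k)
                = ∑ j ∈ Khi.image q, lo j := by
                  rw [sum_image (fun x _ y _ h => hq h)]
              _ ≤ X := by
                  rw [hX]
                  apply sum_le_sum_of_subset_of_nonneg
                  · intro j hj
                    rw [mem_image] at hj
                    obtain ⟨k, hk, rfl⟩ := hj
                    rw [hBc, mem_filter]
                    exact ⟨mem_univ _, hout k hk⟩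
                  · intro l _ _; exact hlo0 l
        _ ≤ (R⁻¹)^(g+1) * (K⁻¹ * X) := by
            rw [pow_succ, mul_assoc]
            apply mul_le_mul_of_nonneg_left _ (by positivity)
            apply mul_le_mul_of_nonneg_right _ hX0
            apply inv_anti₀ hK0
            rw [hR]
            have h9 : 0 < 1/δ := by positivity
            linarith
        _ ≤ (R⁻¹)^(g+1) * ∑ j ∈ B, hi j := by
            apply mul_le_mul_of_nonneg_left _ (by positivity)
            rw [← inv_mul_cancel_left₀ (ne_of_gt hK0) (∑ j ∈ B, hi j)]
            exact mul_le_mul_of_nonneg_left hXbound (by positivity)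
        _ = (R⁻¹)^(g+1) * ∑ k ∈ Klow, hi (q k) := by
            rw [← himage, sum_image (fun x _ y _ h => hq h)]
        _ = ∑ k ∈ Klow, (R⁻¹)^(g+1) * hi (q k) := by rw [mul_sum]
        _ ≤ ∑ k ∈ Klow, (R⁻¹)^((k:ℕ)+1) * hi (q k) := by
            apply sum_le_sum
            intro k hk
            exact mul_le_mul_of_nonneg_right (hcoefflow k hk) (hhi0 _)
    · -- Khi is empty
      push_neg at hne
      have hempty : Khi = ∅ := by
        rw [hKhi, Finset.filter_eq_empty_iff]
        intro k _
        push_neg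
        exact hne k
      rw [hempty, Finset.sum_empty]
      apply sum_nonneg
      intro k _
      have := hhi0 (q k)
      positivity
  · -- case (ii): some bottom position maps high
    push_neg at hcase
    obtain ⟨k₀, hk₀g, hk₀q⟩ := hcase
    have hmain : (R⁻¹)^(g+1) * δ ≤ ∑ k ∈ Klow, (R⁻¹)^((k:ℕ)+1) * hi (q k) := by
      have hk₀mem : k₀ ∈ Klow := by rw [hKlow, mem_filter]; exact ⟨mem_univ _, hk₀g⟩
      have hsingle : (R⁻¹)^((k₀:ℕ)+1) * hi (q k₀) ≤ ∑ k ∈ Klow, (R⁻¹)^((k:ℕ)+1) * hi (q k) := by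
        apply Finset.single_le_sum (fun k _ => ?_) hk₀mem
        have := hhi0 (q k)
        positivity
      have hdiagterm : δ ≤ hi (q k₀) := by
        calc δ ≤ a (q k₀) (q k₀) := hdiag _
          _ ≤ hi (q k₀) := by
            apply Finset.single_le_sum (fun j _ => ha0 _ j)
            rw [hBc, mem_filter]
            exact ⟨mem_univ _, hk₀q⟩
      calc (R⁻¹)^(g+1) * δ ≤ (R⁻¹)^((k₀:ℕ)+1) * hi (q k₀) := by
            apply mul_le_mul (hcoefflow k₀ hk₀mem) hdiagterm (le_of_lt hδ) (by positivity)
        _ ≤ _ := hsingle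
    calc ∑ k ∈ Khi, (R⁻¹)^((k:ℕ)+1) * lo (q k)
        ≤ (R⁻¹)^(g+1) * (R-1)⁻¹ := tail1
      _ ≤ (R⁻¹)^(g+1) * δ := mul_le_mul_of_nonneg_left hRinv (by positivity)
      _ ≤ _ := hmain

lemma bms_tele {N : ℕ} (hN0 : 0 < N) (y : Fin N → ℝ) (hy : Monotone y) :
    ∃ γ : ℕ → ℝ, (∀ n, 0 ≤ γ n) ∧
      ∀ i j : Fin N, y j - y i =
        (∑ g ∈ Finset.Ico (i:ℕ) (j:ℕ), γ g) - (∑ g ∈ Finset.Ico (j:ℕ) (i:ℕ), γ g) := by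
  set F : ℕ → ℝ := fun n => y ⟨min n (N-1), by omega⟩ with hF
  have hFy : ∀ j : Fin N, F (j:ℕ) = y j := by
    intro j
    apply congrArg y
    apply Fin.ext
    simp only
    omega
  refine ⟨fun n => F (n+1) - F n, ?_, ?_⟩
  · intro n
    simp only [sub_nonneg]
    apply hy
    rw [Fin.mk_le_mk]
    omega
  · have key : ∀ u v : ℕ, u ≤ v → ∑ g ∈ Finset.Ico u v, (F (g+1) - F g) = F v - F u := by
      intro u v huv
      rw [Finset.sum_Ico_eq_sub _ huv, Finset.sum_range_sub F, Finset.sum_range_sub F]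
      ring
    intro i j
    rcases le_total (i:ℕ) (j:ℕ) with h | h
    · rw [Finset.Ico_eq_empty (by omega : ¬ (j:ℕ) < (i:ℕ)), Finset.sum_empty, sub_zero,
        key _ _ h, hFy, hFy]
    · rw [Finset.Ico_eq_empty (by omega : ¬ (i:ℕ) < (j:ℕ)), Finset.sum_empty, zero_sub,
        key _ _ h, hFy, hFy]
      ring

lemma bms_master {N m : ℕ} (a : Fin N → Fin N → ℝ) (y y' : Fin N → ℝ) {δ K R : ℝ}
    (hδ : 0 < δ) (hK : 1 ≤ K) (hR : R = K + 1 + 1/δ)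
    (ha0 : ∀ i j, 0 ≤ a i j) (harow : ∀ i, ∑ j, a i j = 1)
    (hdiag : ∀ i, δ ≤ a i i) (hsym : ∀ i j, a j i ≤ K * a i j)
    (hy : Monotone y) (hy' : ∀ i, y' i = ∑ j, a i j * y j)
    (hm : m ≤ N) (q : Fin m → Fin N) (hq : Function.Injective q) :
    ∑ k : Fin m, (R⁻¹)^((k:ℕ)+1) * y (Fin.castLE hm k) ≤
      ∑ k : Fin m, (R⁻¹)^((k:ℕ)+1) * y' (q k) := by
  rcases Nat.eq_zero_or_pos N with hN | hN0
  · have hm0 : m = 0 := by omega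
    subst hm0
    simp
  obtain ⟨γ, hγ0, tele⟩ := bms_tele hN0 y hy
  -- reduce to nonnegativity of the difference
  rw [← sub_nonneg, ← Finset.sum_sub_distrib]
  have e0 : ∀ k : Fin m, (R⁻¹)^((k:ℕ)+1) * y' (q k) - (R⁻¹)^((k:ℕ)+1) * y (Fin.castLE hm k)
      = (R⁻¹)^((k:ℕ)+1) * (y' (q k) - y (Fin.castLE hm k)) := by intro k; ring
  rw [Finset.sum_congr rfl (fun k _ => e0 k)]
  -- expand y'
  have e1 : ∀ k : Fin m, y' (q k) - y (Fin.castLE hm k)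
      = ∑ j, a (q k) j * (y j - y (Fin.castLE hm k)) := by
    intro k
    rw [hy']
    have : ∑ j, a (q k) j * (y j - y (Fin.castLE hm k))
        = (∑ j, a (q k) j * y j) - (∑ j, a (q k) j) * y (Fin.castLE hm k) := by
      rw [Finset.sum_mul, ← Finset.sum_sub_distrib]
      exact Finset.sum_congr rfl (fun j _ => by ring)
    rw [this, harow, one_mul]
  rw [Finset.sum_congr rfl (fun k _ => by rw [e1 k])]
  -- indicator form of telescoping
  set ψ : Fin m → Fin N → ℕ → ℝ := fun k j g =>
    (if (k:ℕ) ≤ g ∧ g < (j:ℕ) then 1 else 0) - (if (j:ℕ) ≤ g ∧ g < (k:ℕ) then 1 else 0) with hψ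
  have hIco : ∀ u v : ℕ, v ≤ N - 1 → ∑ g ∈ Finset.Ico u v, γ g
      = ∑ g ∈ range (N-1), if u ≤ g ∧ g < v then γ g else 0 := by
    intro u v hv
    rw [← Finset.sum_filter]
    apply Finset.sum_congr _ (fun _ _ => rfl)
    ext g
    simp only [Finset.mem_Ico, Finset.mem_filter, Finset.mem_range]
    omega
  have e2 : ∀ (k : Fin m) (j : Fin N), y j - y (Fin.castLE hm k)
      = ∑ g ∈ range (N-1), ψ k j g * γ g := by
    intro k j
    have hkN : ((Fin.castLE hm k : Fin N) : ℕ) = (k:ℕ) := rfl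
    rw [tele (Fin.castLE hm k) j, hkN]
    rw [hIco _ _ (by omega : (j:ℕ) ≤ N - 1), hIco _ _ (by omega : (k:ℕ) ≤ N - 1)]
    rw [← Finset.sum_sub_distrib]
    apply Finset.sum_congr rfl
    intro g _
    rw [hψ]
    simp only
    split_ifs <;> ring
  rw [Finset.sum_congr rfl (fun k _ => by
    rw [Finset.sum_congr rfl (fun j (_ : j ∈ univ) => by rw [e2 k j])])]
  -- swap sums to gaps
  have e3 : ∑ k : Fin m, (R⁻¹)^((k:ℕ)+1) * ∑ j, a (q k) j * ∑ g ∈ range (N-1), ψ k j g * γ g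
      = ∑ g ∈ range (N-1), γ g *
          ∑ k : Fin m, (R⁻¹)^((k:ℕ)+1) * ∑ j, a (q k) j * ψ k j g := by
    have s1 : ∀ k : Fin m, ∑ j, a (q k) j * ∑ g ∈ range (N-1), ψ k j g * γ g
        = ∑ g ∈ range (N-1), ∑ j, a (q k) j * (ψ k j g * γ g) := by
      intro k
      rw [Finset.sum_congr rfl (fun j (_ : j ∈ univ) => Finset.mul_sum _ _ _)]
      exact Finset.sum_comm
    calc ∑ k : Fin m, (R⁻¹)^((k:ℕ)+1) * ∑ j, a (q k) j * ∑ g ∈ range (N-1), ψ k j g * γ g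
        = ∑ k : Fin m, ∑ g ∈ range (N-1), (R⁻¹)^((k:ℕ)+1) * ∑ j, a (q k) j * (ψ k j g * γ g) := by
          apply Finset.sum_congr rfl
          intro k _
          rw [s1 k, Finset.mul_sum]
      _ = ∑ g ∈ range (N-1), ∑ k : Fin m, (R⁻¹)^((k:ℕ)+1) * ∑ j, a (q k) j * (ψ k j g * γ g) :=
          Finset.sum_comm
      _ = ∑ g ∈ range (N-1), γ g * ∑ k : Fin m, (R⁻¹)^((k:ℕ)+1) * ∑ j, a (q k) j * ψ k j g := by
          apply Finset.sum_congr rfl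
          intro g _
          rw [Finset.mul_sum]
          apply Finset.sum_congr rfl
          intro k _
          rw [Finset.mul_sum, Finset.mul_sum, Finset.mul_sum]
          apply Finset.sum_congr rfl
          intro j _
          ring
  rw [e3]
  apply Finset.sum_nonneg
  intro g hg
  have hgN : g + 1 < N := by
    rw [Finset.mem_range] at hg
    omega
  apply mul_nonneg (hγ0 g)
  -- per-gap inner sum
  have e4 : ∀ k : Fin m, ∑ j, a (q k) j * ψ k j g
      = if (k:ℕ) ≤ g then (∑ j ∈ univ.filter (fun j : Fin N => g < (j:ℕ)), a (q k) j)
        else -(∑ j ∈ univ.filter (fun j : Fin N => (j:ℕ) ≤ g), a (q k) j) := by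
    intro k
    by_cases hk : (k:ℕ) ≤ g
    · rw [if_pos hk, Finset.sum_filter]
      apply Finset.sum_congr rfl
      intro j _
      rw [hψ]
      simp only
      have h2 : ¬((j:ℕ) ≤ g ∧ g < (k:ℕ)) := by omega
      rw [if_neg h2, sub_zero]
      by_cases h1 : g < (j:ℕ)
      · rw [if_pos h1, if_pos ⟨hk, h1⟩, mul_one]
      · rw [if_neg h1, if_neg (fun hc => h1 hc.2), mul_zero]
    · rw [if_neg hk, Finset.sum_filter, ← Finset.sum_neg_distrib]
      apply Finset.sum_congr rfl
      intro j _
      rw [hψ]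
      simp only
      have h1 : ¬((k:ℕ) ≤ g ∧ g < (j:ℕ)) := by omega
      rw [if_neg h1, zero_sub]
      by_cases h2 : (j:ℕ) ≤ g
      · rw [if_pos h2, if_pos ⟨h2, by omega⟩]; ring
      · rw [if_neg h2, if_neg (fun hc => h2 hc.1)]; ring
  rw [Finset.sum_congr rfl (fun k _ => by rw [e4 k])]
  -- split by position and apply the gap lemma
  rw [← Finset.sum_filter_add_sum_filter_not univ (fun k : Fin m => (k:ℕ) ≤ g)]
  have e5 : ∑ k ∈ univ.filter (fun k : Fin m => (k:ℕ) ≤ g),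
      (R⁻¹)^((k:ℕ)+1) * (if (k:ℕ) ≤ g then (∑ j ∈ univ.filter (fun j : Fin N => g < (j:ℕ)), a (q k) j)
        else -(∑ j ∈ univ.filter (fun j : Fin N => (j:ℕ) ≤ g), a (q k) j))
      = ∑ k ∈ univ.filter (fun k : Fin m => (k:ℕ) ≤ g),
      (R⁻¹)^((k:ℕ)+1) * (∑ j ∈ univ.filter (fun j : Fin N => g < (j:ℕ)), a (q k) j) := by
    apply Finset.sum_congr rfl
    intro k hk
    rw [Finset.mem_filter] at hk
    rw [if_pos hk.2]
  have e6 : ∑ k ∈ univ.filter (fun k : Fin m => ¬((k:ℕ) ≤ g)),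
      (R⁻¹)^((k:ℕ)+1) * (if (k:ℕ) ≤ g then (∑ j ∈ univ.filter (fun j : Fin N => g < (j:ℕ)), a (q k) j)
        else -(∑ j ∈ univ.filter (fun j : Fin N => (j:ℕ) ≤ g), a (q k) j))
      = -∑ k ∈ univ.filter (fun k : Fin m => g < (k:ℕ)),
      (R⁻¹)^((k:ℕ)+1) * (∑ j ∈ univ.filter (fun j : Fin N => (j:ℕ) ≤ g), a (q k) j) := by
    rw [← Finset.sum_neg_distrib]
    apply Finset.sum_congr
    · apply Finset.filter_congr
      intro k _
      simp [not_le]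
    · intro k hk
      rw [Finset.mem_filter] at hk
      have hk2 : ¬((k:ℕ) ≤ g) := by have := hk.2; omega
      rw [if_neg hk2]
      ring
  rw [e5, e6]
  have := bms_gap a hδ hK hR ha0 harow hdiag hsym q hq g hgN
  linarith


lemma bms_identity (w : Fin N → ℝ)
    (X X' : Fin N → EuclideanSpace ℝ (Fin p)) (c : Fin N → Fin N → ℝ)
    (hc_sym : ∀ i j, c i j = c j i)
    (hc0 : ∀ i j, 0 ≤ c i j)
    (hcd : ∀ i, c i i = w i * w i)
    (hmean : ∀ i, ∑ j, c i j • (X' i - X j) = (0 : EuclideanSpace ℝ (Fin p))) :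
    ∑ i, ∑ j, c i j * (‖X' i - X' j‖^2 - ‖X i - X j‖^2)
      ≤ -(4:ℝ) * ∑ i, (w i)^2 * ‖X' i - X i‖^2 := by
  set Δ : Fin N → EuclideanSpace ℝ (Fin p) := fun i => X' i - X i with hΔ
  have key_i : ∀ i, ∑ j, c i j * ⟪X i - X j, Δ i⟫ + (∑ j, c i j) * ‖Δ i‖^2 = 0 := by
    intro i
    have h1 : ∑ j, c i j * ⟪X i - X j, Δ i⟫ + (∑ j, c i j) * ‖Δ i‖^2
        = ⟪∑ j, c i j • (X' i - X j), Δ i⟫ := by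
      rw [sum_inner, Finset.sum_mul, ← Finset.sum_add_distrib]
      apply Finset.sum_congr rfl
      intro j _
      rw [real_inner_smul_left]
      have h2 : X' i - X j = (X i - X j) + Δ i := by rw [hΔ]; beta_reduce; abel
      rw [h2, inner_add_left, real_inner_self_eq_norm_sq]
      ring
    rw [h1, hmean i, inner_zero_left]
  have perpair : ∀ i j, ‖X' i - X' j‖^2 - ‖X i - X j‖^2 + ‖Δ i + Δ j‖^2
      = (2*⟪X i - X j, Δ i⟫ + 2*‖Δ i‖^2) + (-2*⟪X i - X j, Δ j⟫ + 2*‖Δ j‖^2) := by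
    intro i j
    have h2 : X' i - X' j = (X i - X j) + (Δ i - Δ j) := by rw [hΔ]; beta_reduce; abel
    rw [h2, norm_add_sq_real, norm_add_sq_real (Δ i) (Δ j), norm_sub_sq_real (Δ i) (Δ j),
      inner_sub_right]
    ring
  have claim2 : ∑ i, ∑ j, c i j * (-2*⟪X i - X j, Δ j⟫ + 2*‖Δ j‖^2)
      = ∑ i, ∑ j, c i j * (2*⟪X i - X j, Δ i⟫ + 2*‖Δ i‖^2) := by
    rw [Finset.sum_comm]
    apply Finset.sum_congr rfl
    intro i _
    apply Finset.sum_congr rfl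
    intro j _
    rw [hc_sym j i]
    have h3 : X j - X i = -(X i - X j) := by abel
    rw [h3, inner_neg_left]
    ring
  have claim3 : ∑ i, ∑ j, c i j * (2*⟪X i - X j, Δ i⟫ + 2*‖Δ i‖^2) = 0 := by
    apply Finset.sum_eq_zero
    intro i _
    have h4 : ∑ j, c i j * (2*⟪X i - X j, Δ i⟫ + 2*‖Δ i‖^2)
        = 2 * (∑ j, c i j * ⟪X i - X j, Δ i⟫ + (∑ j, c i j) * ‖Δ i‖^2) := by
      rw [Finset.sum_congr rfl (fun j (_ : j ∈ univ) =>
        show c i j * (2*⟪X i - X j, Δ i⟫ + 2*‖Δ i‖^2)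
          = 2*(c i j * ⟪X i - X j, Δ i⟫) + 2*‖Δ i‖^2 * c i j from by ring)]
      rw [Finset.sum_add_distrib, ← Finset.mul_sum, ← Finset.mul_sum]
      ring
    rw [h4, key_i i, mul_zero]
  have S1 : ∑ i, ∑ j, c i j * (‖X' i - X' j‖^2 - ‖X i - X j‖^2 + ‖Δ i + Δ j‖^2) = 0 := by
    have : ∀ i j, c i j * (‖X' i - X' j‖^2 - ‖X i - X j‖^2 + ‖Δ i + Δ j‖^2)
        = c i j * (2*⟪X i - X j, Δ i⟫ + 2*‖Δ i‖^2) + c i j * (-2*⟪X i - X j, Δ j⟫ + 2*‖Δ j‖^2) := by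
      intro i j
      rw [← mul_add, ← perpair i j]
    rw [Finset.sum_congr rfl (fun i _ => Finset.sum_congr rfl (fun j (_ : j ∈ univ) => this i j))]
    rw [Finset.sum_congr rfl (fun i (_ : i ∈ univ) => Finset.sum_add_distrib),
      Finset.sum_add_distrib, claim2, claim3]
    ring
  have S2 : ∑ i, ∑ j, c i j * (‖X' i - X' j‖^2 - ‖X i - X j‖^2)
      = - ∑ i, ∑ j, c i j * ‖Δ i + Δ j‖^2 := by
    have h5 : ∀ i j, c i j * (‖X' i - X' j‖^2 - ‖X i - X j‖^2)
        = c i j * (‖X' i - X' j‖^2 - ‖X i - X j‖^2 + ‖Δ i + Δ j‖^2) - c i j * ‖Δ i + Δ j‖^2 := by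
      intro i j; ring
    rw [Finset.sum_congr rfl (fun i _ => Finset.sum_congr rfl (fun j (_ : j ∈ univ) => h5 i j))]
    rw [Finset.sum_congr rfl (fun i (_ : i ∈ univ) => Finset.sum_sub_distrib _ _),
      Finset.sum_sub_distrib, S1]
    ring
  rw [S2]
  have S3 : ∑ i, (4:ℝ) * ((w i)^2 * ‖Δ i‖^2) ≤ ∑ i, ∑ j, c i j * ‖Δ i + Δ j‖^2 := by
    apply Finset.sum_le_sum
    intro i _
    have hd : c i i * ‖Δ i + Δ i‖^2 ≤ ∑ j, c i j * ‖Δ i + Δ j‖^2 := by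
      exact Finset.single_le_sum (f := fun j => c i j * ‖Δ i + Δ j‖^2)
        (fun j _ => mul_nonneg (hc0 i j) (by positivity)) (mem_univ i)
    have he : c i i * ‖Δ i + Δ i‖^2 = 4 * ((w i)^2 * ‖Δ i‖^2) := by
      have h6 : Δ i + Δ i = (2:ℝ) • Δ i := (two_smul ℝ (Δ i)).symm
      have h2n : ‖(2:ℝ)‖ = 2 := by norm_num
      rw [h6, norm_smul, h2n, hcd i, mul_pow]
      ring
    linarith
  have S4 : ∑ i, (4:ℝ) * ((w i)^2 * ‖X' i - X i‖^2) ≤ ∑ i, ∑ j, c i j * ‖Δ i + Δ j‖^2 := S3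
  have S5 : ∑ i, (4:ℝ) * ((w i)^2 * ‖X' i - X i‖^2) = 4 * ∑ i, (w i)^2 * ‖X' i - X i‖^2 := by
    rw [Finset.mul_sum]
  linarith

lemma bms_concave (gc : ℝ → ℝ) (hanti : Antitone gc) (a b : ℝ) :
    (∫ u in (0:ℝ)..b, gc (Real.sqrt u)) - (∫ u in (0:ℝ)..a, gc (Real.sqrt u))
      ≤ gc (Real.sqrt a) * (b - a) := by
  have hint : Antitone (fun u => gc (Real.sqrt u)) :=
    hanti.comp_monotone (fun _ _ h => Real.sqrt_le_sqrt h)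
  have hab : ∀ u v : ℝ, IntervalIntegrable (fun u => gc (Real.sqrt u)) MeasureTheory.volume u v :=
    fun u v => hint.intervalIntegrable
  have hsub : (∫ u in (0:ℝ)..b, gc (Real.sqrt u)) - (∫ u in (0:ℝ)..a, gc (Real.sqrt u))
      = ∫ u in a..b, gc (Real.sqrt u) :=
    intervalIntegral.integral_interval_sub_left (hab 0 b) (hab 0 a)
  rw [hsub]
  rcases le_total a b with h | h
  · calc ∫ u in a..b, gc (Real.sqrt u) ≤ ∫ _u in a..b, gc (Real.sqrt a) := by
          apply intervalIntegral.integral_mono_on h (hab a b) intervalIntegrable_const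
          intro u hu
          exact hanti (Real.sqrt_le_sqrt hu.1)
      _ = gc (Real.sqrt a) * (b - a) := by
          rw [intervalIntegral.integral_const, smul_eq_mul]
          ring
  · have h1 : ∫ u in a..b, gc (Real.sqrt u) = -∫ u in b..a, gc (Real.sqrt u) :=
      (intervalIntegral.integral_symm b a)
    rw [h1]
    have h2 : ∫ _u in b..a, gc (Real.sqrt a) ≤ ∫ u in b..a, gc (Real.sqrt u) := by
      apply intervalIntegral.integral_mono_on h intervalIntegrable_const (hab b a)
      intro u hu
      exact hanti (Real.sqrt_le_sqrt hu.2)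
    rw [intervalIntegral.integral_const, smul_eq_mul] at h2
    nlinarith [h2]

lemma bms_partA (f : EuclideanSpace ℝ (Fin p) → ℝ) (g : ℝ → ℝ)
    (hf01 : ∀ u, 0 ≤ f u ∧ f u ≤ 1) (hf1 : ∀ u, f u = 1 ↔ u = 0)
    (hradial : ∀ u, f u = g ‖u‖) (hmono : ∀ r s : ℝ, 0 ≤ r → r ≤ s → g s ≤ g r)
    (w : Fin N → ℝ) (hw : ∀ j, 0 < w j)
    (x : ℕ → Fin N → EuclideanSpace ℝ (Fin p))
    (hupd : ∀ t i, x (t + 1) i =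
      (∑ k, f (x t i - x t k) * w k)⁻¹ • ∑ j, (f (x t i - x t j) * w j) • x t j) :
    Summable (fun t => ∑ i, (w i)^2 * ‖x (t+1) i - x t i‖^2) := by
  have hf0 : f 0 = 1 := (hf1 0).mpr rfl
  set gc : ℝ → ℝ := fun r => max 0 (min 1 (g (max r 0))) with hgc
  have hgc_anti : Antitone gc := by
    intro r s hrs
    apply max_le_max le_rfl
    apply min_le_min le_rfl
    exact hmono (max r 0) (max s 0) (le_max_right _ _) (max_le_max hrs le_rfl)
  have hgcf : ∀ u, gc ‖u‖ = f u := by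
    intro u
    rw [hgc]
    simp only
    rw [max_eq_left (norm_nonneg u), ← hradial u, min_eq_right (hf01 u).2,
      max_eq_right (hf01 u).1]
  have hgc0 : ∀ r, 0 ≤ gc r := fun r => le_max_left _ _
  set G : ℝ → ℝ := fun s => ∫ u in (0:ℝ)..s, gc (Real.sqrt u) with hGdef
  have hG0 : ∀ s, 0 ≤ s → 0 ≤ G s := by
    intro s hs
    exact intervalIntegral.integral_nonneg hs (fun u _ => hgc0 _)
  set E : ℕ → ℝ := fun t => ∑ i, ∑ j, (w i * w j) * G (‖x t i - x t j‖^2) with hE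
  have hE0 : ∀ t, 0 ≤ E t := by
    intro t
    apply Finset.sum_nonneg
    intro i _
    apply Finset.sum_nonneg
    intro j _
    exact mul_nonneg (mul_nonneg (hw i).le (hw j).le) (hG0 _ (sq_nonneg _))
  have hstep : ∀ t, 4 * (∑ i, (w i)^2 * ‖x (t+1) i - x t i‖^2) ≤ E t - E (t+1) := by
    intro t
    set c : Fin N → Fin N → ℝ := fun i j => w i * w j * f (x t i - x t j) with hc
    have hcsym : ∀ i j, c i j = c j i := by
      intro i j
      rw [hc]
      simp only
      rw [hradial (x t i - x t j), hradial (x t j - x t i), norm_sub_rev]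
      ring
    have hc0 : ∀ i j, 0 ≤ c i j := fun i j =>
      mul_nonneg (mul_nonneg (hw i).le (hw j).le) (hf01 _).1
    have hcd : ∀ i, c i i = w i * w i := by
      intro i
      rw [hc]
      simp only
      rw [sub_self, hf0, mul_one]
    have hDp : ∀ i, (0:ℝ) < ∑ k, f (x t i - x t k) * w k := by
      intro i
      have h1 : f (x t i - x t i) * w i = w i := by rw [sub_self, hf0, one_mul]
      calc (0:ℝ) < w i := hw i
        _ = f (x t i - x t i) * w i := h1.symm
        _ ≤ ∑ k, f (x t i - x t k) * w k :=
            Finset.single_le_sum (f := fun k => f (x t i - x t k) * w k)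
              (fun k _ => mul_nonneg (hf01 _).1 (hw k).le) (mem_univ i)
    have hmean0 : ∀ i, ∑ j, (f (x t i - x t j) * w j) • (x (t+1) i - x t j)
        = (0 : EuclideanSpace ℝ (Fin p)) := by
      intro i
      have h1 : ∑ j, (f (x t i - x t j) * w j) • (x (t+1) i - x t j)
          = (∑ j, f (x t i - x t j) * w j) • x (t+1) i
            - ∑ j, (f (x t i - x t j) * w j) • x t j := by
        rw [Finset.sum_congr rfl (fun j (_ : j ∈ univ) => smul_sub _ _ (x t j)),
          Finset.sum_sub_distrib, ← Finset.sum_smul]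
      rw [h1, hupd t i, smul_smul, mul_inv_cancel₀ (ne_of_gt (hDp i)), one_smul, sub_self]
    have hmean : ∀ i, ∑ j, c i j • (x (t+1) i - x t j) = (0 : EuclideanSpace ℝ (Fin p)) := by
      intro i
      have h2 : ∀ j, c i j • (x (t+1) i - x t j)
          = w i • ((f (x t i - x t j) * w j) • (x (t+1) i - x t j)) := by
        intro j
        rw [← mul_smul]
        congr 1
        rw [hc]
        ring
      rw [Finset.sum_congr rfl (fun j _ => h2 j), ← Finset.smul_sum, hmean0 i, smul_zero]
    have hconc : E (t+1) - E t
        ≤ ∑ i, ∑ j, c i j * (‖x (t+1) i - x (t+1) j‖^2 - ‖x t i - x t j‖^2) := by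
      rw [hE]
      simp only
      rw [← Finset.sum_sub_distrib]
      rw [Finset.sum_congr rfl (fun i (_ : i ∈ univ) => (Finset.sum_sub_distrib _ _).symm)]
      apply Finset.sum_le_sum
      intro i _
      apply Finset.sum_le_sum
      intro j _
      have h3 : Real.sqrt (‖x t i - x t j‖^2) = ‖x t i - x t j‖ :=
        Real.sqrt_sq (norm_nonneg _)
      have h4 := bms_concave gc hgc_anti (‖x t i - x t j‖^2) (‖x (t+1) i - x (t+1) j‖^2)
      rw [h3, hgcf] at h4
      have h5 : (0:ℝ) ≤ w i * w j := mul_nonneg (hw i).le (hw j).le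
      have h6 := mul_le_mul_of_nonneg_left h4 h5
      rw [hc]
      simp only
      have h7 : G (‖x (t+1) i - x (t+1) j‖^2) - G (‖x t i - x t j‖^2)
          = (∫ u in (0:ℝ)..(‖x (t+1) i - x (t+1) j‖^2), gc (Real.sqrt u))
            - ∫ u in (0:ℝ)..(‖x t i - x t j‖^2), gc (Real.sqrt u) := rfl
      nlinarith [h6]
    have hiden := bms_identity w (x t) (x (t+1)) c hcsym hc0 hcd hmean
    linarith
  apply summable_of_sum_range_le (c := E 0 / 4)
  · intro t
    apply Finset.sum_nonneg
    intro i _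
    positivity
  · intro T
    have h1 : ∑ t ∈ range T, (E t - E (t+1)) = E 0 - E T := Finset.sum_range_sub' E T
    have h2 : ∑ t ∈ range T, 4 * (∑ i, (w i)^2 * ‖x (t+1) i - x t i‖^2) ≤ E 0 - E T := by
      rw [← h1]
      exact Finset.sum_le_sum (fun t _ => hstep t)
    rw [← Finset.mul_sum] at h2
    have h3 := hE0 T
    linarith


lemma coord_le_norm {p : ℕ} (v : EuclideanSpace ℝ (Fin p)) (l : Fin p) : |v l| ≤ ‖v‖ := by
  rw [EuclideanSpace.norm_eq]
  have h1 : ‖v l‖^2 ≤ ∑ i, ‖v i‖^2 :=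
    Finset.single_le_sum (f := fun i => ‖v i‖^2) (fun i _ => sq_nonneg _) (Finset.mem_univ l)
  have h2 := Real.sqrt_le_sqrt h1
  rw [Real.sqrt_sq (norm_nonneg _), Real.norm_eq_abs] at h2
  exact h2

lemma sum_fin_cast {N m : ℕ} (hm : m ≤ N) (F : Fin N → ℝ) :
    ∑ k : Fin m, F (Fin.castLE hm k)
      = ∑ r ∈ Finset.univ.filter (fun r : Fin N => (r:ℕ) < m), F r := by
  apply Finset.sum_bij (fun (k : Fin m) _ => Fin.castLE hm k)
  · intro k _
    rw [mem_filter]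
    exact ⟨mem_univ _, k.isLt⟩
  · intro k1 _ k2 _ h
    exact Fin.castLE_injective hm h
  · intro r hr
    rw [mem_filter] at hr
    exact ⟨⟨(r:ℕ), hr.2⟩, mem_univ _, by apply Fin.ext; rfl⟩
  · intro k _
    rfl

end BMSAux

open Finset in
theorem stmt_6 (p N : ℕ) (f : EuclideanSpace ℝ (Fin p) → ℝ) (g : ℝ → ℝ)
    (hf01 : ∀ u, 0 ≤ f u ∧ f u ≤ 1) (hf1 : ∀ u, f u = 1 ↔ u = 0)
    (hradial : ∀ u, f u = g ‖u‖) (hmono : ∀ r s : ℝ, 0 ≤ r → r ≤ s → g s ≤ g r)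
    (w : Fin N → ℝ) (hw : ∀ j, 0 < w j)
    (x : ℕ → Fin N → EuclideanSpace ℝ (Fin p))
    (hupd : ∀ t i, x (t + 1) i =
      (∑ k, f (x t i - x t k) * w k)⁻¹ • ∑ j, (f (x t i - x t j) * w j) • x t j) :
    ∀ i, ∃ xstar : EuclideanSpace ℝ (Fin p),
      Tendsto (fun t => x t i) atTop (nhds xstar) := by
  classical
  intro i0
  have hne : (univ : Finset (Fin N)).Nonempty := ⟨i0, mem_univ i0⟩
  -- constants
  set W : ℝ := ∑ j, w j with hWdef
  have hW0 : 0 < W := Finset.sum_pos (fun j _ => hw j) hne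
  set wmin : ℝ := univ.inf' hne w with hwmindef
  set wmax : ℝ := univ.sup' hne w with hwmaxdef
  have hwmin_le : ∀ j, wmin ≤ w j := fun j => Finset.inf'_le w (mem_univ j)
  have hwmax_ge : ∀ j, w j ≤ wmax := fun j => Finset.le_sup' w (mem_univ j)
  have hwmin0 : 0 < wmin := by
    obtain ⟨j, _, hj⟩ := Finset.exists_mem_eq_inf' hne w
    rw [hwmindef, hj]
    exact hw j
  have hwj_le_W : ∀ j, w j ≤ W := by
    intro j
    exact Finset.single_le_sum (f := w) (fun k _ => (hw k).le) (mem_univ j)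
  have hwminW : wmin ≤ W := le_trans (hwmin_le i0) (hwj_le_W i0)
  set dl : ℝ := wmin / W with hdldef
  set K : ℝ := (wmax * W) / (wmin * wmin) with hKdef
  have hdl0 : 0 < dl := div_pos hwmin0 hW0
  have hwminmax : wmin ≤ wmax := le_trans (hwmin_le i0) (hwmax_ge i0)
  have hK1 : 1 ≤ K := by
    rw [hKdef, le_div_iff₀ (by positivity)]
    nlinarith
  set R : ℝ := K + 1 + 1/dl with hRdef
  have hR1 : 1 < R := by
    have h9 : 0 < 1/dl := by positivity
    rw [hRdef]; linarith
  have hR0 : (0:ℝ) < R := lt_trans one_pos hR1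
  have hr01 : 0 < R⁻¹ := inv_pos.mpr hR0
  have hrle1 : R⁻¹ ≤ 1 := by
    rw [inv_le_one_iff₀]; right; exact hR1.le
  -- the matrices
  have hf0 : f 0 = 1 := (hf1 0).mpr rfl
  set Dp : ℕ → Fin N → ℝ := fun t i => ∑ k, f (x t i - x t k) * w k with hDpdef
  have hDp_lb : ∀ t i, w i ≤ Dp t i := by
    intro t i
    have h1 : f (x t i - x t i) * w i = w i := by rw [sub_self, hf0, one_mul]
    calc w i = f (x t i - x t i) * w i := h1.symm
      _ ≤ Dp t i := Finset.single_le_sum (f := fun k => f (x t i - x t k) * w k)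
          (fun k _ => mul_nonneg (hf01 _).1 (hw k).le) (mem_univ i)
  have hDp0 : ∀ t i, 0 < Dp t i := fun t i => lt_of_lt_of_le (hw i) (hDp_lb t i)
  have hDp_ub : ∀ t i, Dp t i ≤ W := by
    intro t i
    rw [hWdef]
    apply Finset.sum_le_sum
    intro k _
    calc f (x t i - x t k) * w k ≤ 1 * w k :=
          mul_le_mul_of_nonneg_right (hf01 _).2 (hw k).le
      _ = w k := one_mul _
  set a : ℕ → Fin N → Fin N → ℝ := fun t i j => f (x t i - x t j) * w j / Dp t i with hadef
  have ha0 : ∀ t i j, 0 ≤ a t i j :=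
    fun t i j => div_nonneg (mul_nonneg (hf01 _).1 (hw j).le) (hDp0 t i).le
  have harow : ∀ t i, ∑ j, a t i j = 1 := by
    intro t i
    rw [hadef]
    simp only
    rw [← Finset.sum_div]
    exact div_self (ne_of_gt (hDp0 t i))
  have hdiag : ∀ t i, dl ≤ a t i i := by
    intro t i
    have h1 : a t i i = w i / Dp t i := by
      rw [hadef]; simp only; rw [sub_self, hf0, one_mul]
    rw [h1, hdldef]
    exact div_le_div₀ (hw i).le (hwmin_le i) (hDp0 t i) (hDp_ub t i)
  have hfsym : ∀ t i j, f (x t j - x t i) = f (x t i - x t j) := by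
    intro t i j
    rw [hradial (x t j - x t i), hradial (x t i - x t j), norm_sub_rev]
  have hsym : ∀ t i j, a t j i ≤ K * a t i j := by
    intro t i j
    rw [hadef]
    simp only
    rw [hfsym t i j, div_le_iff₀ (hDp0 t j), mul_comm K _, mul_assoc, div_mul_eq_mul_div,
      le_div_iff₀ (hDp0 t i)]
    -- f * w i * Dp t i ≤ f * w j * (K * Dp t j)  (roughly)
    have h2 : w i * Dp t i ≤ wmax * W :=
      mul_le_mul (hwmax_ge i) (hDp_ub t i) (hDp0 t i).le (le_trans hwmin0.le (le_trans hwminmax le_rfl))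
    have h3 : wmax * W ≤ K * (w j * Dp t j) := by
      have h4 : wmin * wmin ≤ w j * Dp t j :=
        mul_le_mul (hwmin_le j) (le_trans (hwmin_le j) (hDp_lb t j)) hwmin0.le (hw j).le
      calc wmax * W = K * (wmin * wmin) := by
            rw [hKdef]; field_simp
        _ ≤ K * (w j * Dp t j) := by
            apply mul_le_mul_of_nonneg_left h4 (le_trans one_pos.le hK1)
    have h5 : (0:ℝ) ≤ f (x t i - x t j) := (hf01 _).1
    calc f (x t i - x t j) * w i * Dp t i = f (x t i - x t j) * (w i * Dp t i) := by ring
      _ ≤ f (x t i - x t j) * (K * (w j * Dp t j)) := by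
          apply mul_le_mul_of_nonneg_left (le_trans h2 h3) h5
      _ = f (x t i - x t j) * w j * (K * Dp t j) := by ring
  have hyupd : ∀ t i l, x (t+1) i l = ∑ j, a t i j * x t j l := by
    intro t i l
    have h1 : x (t+1) i l = (Dp t i)⁻¹ * ∑ j, (f (x t i - x t j) * w j) * x t j l := by
      rw [hupd t i]
      have h2 : ((∑ k, f (x t i - x t k) * w k)⁻¹ • ∑ j, (f (x t i - x t j) * w j) • x t j) l
          = (Dp t i)⁻¹ * ((∑ j, (f (x t i - x t j) * w j) • x t j) l) := rfl
      rw [h2]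
      congr 1
      calc (∑ j, (f (x t i - x t j) * w j) • x t j) l
          = ∑ j, ((f (x t i - x t j) * w j) • x t j) l := by rw [WithLp.ofLp_sum, Finset.sum_apply]
        _ = ∑ j, (f (x t i - x t j) * w j) * x t j l := rfl
    rw [h1, Finset.mul_sum]
    apply Finset.sum_congr rfl
    intro j _
    rw [hadef]
    simp only
    ring
  -- step sizes tend to zero
  have hsum := bms_partA f g hf01 hf1 hradial hmono w hw x hupd
  have hS0 := hsum.tendsto_atTop_zero
  have hstep0 : Tendsto (fun t => ‖x (t+1) i0 - x t i0‖) atTop (nhds 0) := by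
    have h1 : ∀ t, (w i0)^2 * ‖x (t+1) i0 - x t i0‖^2
        ≤ ∑ i, (w i)^2 * ‖x (t+1) i - x t i‖^2 := by
      intro t
      exact Finset.single_le_sum (f := fun i => (w i)^2 * ‖x (t+1) i - x t i‖^2)
        (fun i _ => by positivity) (mem_univ i0)
    have h2 : Tendsto (fun t => (w i0)^2 * ‖x (t+1) i0 - x t i0‖^2) atTop (nhds 0) :=
      squeeze_zero (fun t => by positivity) h1 hS0
    have h3 : Tendsto (fun t => ‖x (t+1) i0 - x t i0‖^2) atTop (nhds 0) := by
      have h4 := h2.const_mul (((w i0)^2)⁻¹)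
      rw [mul_zero] at h4
      have h5 : (fun t => ((w i0)^2)⁻¹ * ((w i0)^2 * ‖x (t+1) i0 - x t i0‖^2))
          = fun t => ‖x (t+1) i0 - x t i0‖^2 := by
        funext t
        rw [← mul_assoc, inv_mul_cancel₀ (pow_pos (hw i0) 2).ne', one_mul]
      rwa [h5] at h4
    have h6 := h3.sqrt
    rw [Real.sqrt_zero] at h6
    have h7 : (fun t => Real.sqrt (‖x (t+1) i0 - x t i0‖^2))
        = fun t => ‖x (t+1) i0 - x t i0‖ := by
      funext t
      exact Real.sqrt_sq (norm_nonneg _)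
    rwa [h7] at h6
  -- per-coordinate convergence
  have hcoord : ∀ l : Fin p, ∃ cl : ℝ, Tendsto (fun t => x t i0 l) atTop (nhds cl) := by
    intro l
    set y : ℕ → Fin N → ℝ := fun t j => x t j l with hydef
    have hyupd' : ∀ t i, y (t+1) i = ∑ j, a t i j * y t j := fun t i => hyupd t i l
    -- boundedness
    set C : ℝ := univ.sup' hne (fun j => |y 0 j|) with hCdef
    have hC0 : 0 ≤ C :=
      le_trans (abs_nonneg (y 0 i0)) (Finset.le_sup' (f := fun j => |y 0 j|) (mem_univ i0))
    have hbound : ∀ t j, |y t j| ≤ C := by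
      intro t
      induction t with
      | zero => exact fun j => Finset.le_sup' (f := fun j' => |y 0 j'|) (mem_univ j)
      | succ t ih =>
        intro j
        rw [hyupd' t j]
        calc |∑ j', a t j j' * y t j'| ≤ ∑ j', |a t j j' * y t j'| :=
              Finset.abs_sum_le_sum_abs _ _
          _ ≤ ∑ j', a t j j' * C := by
              apply Finset.sum_le_sum
              intro j' _
              rw [abs_mul, abs_of_nonneg (ha0 t j j')]
              exact mul_le_mul_of_nonneg_left (ih j') (ha0 t j j')
          _ = C := by rw [← Finset.sum_mul, harow t j, one_mul]
    -- sorted values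
    set σ : ℕ → Equiv.Perm (Fin N) := fun t => Tuple.sort (y t) with hσdef
    set ζ : ℕ → Fin N → ℝ := fun t r => y t (σ t r) with hζdef
    have hζmono : ∀ t, Monotone (ζ t) := fun t => Tuple.monotone_sort (y t)
    set V : ℕ → ℕ → ℝ := fun m t =>
      ∑ r ∈ univ.filter (fun r : Fin N => (r:ℕ) < m), (R⁻¹)^((r:ℕ)+1) * ζ t r with hVdef
    have hVmono : ∀ m, m ≤ N → ∀ t, V m t ≤ V m (t+1) := by
      intro m hm t
      set q : Fin m → Fin N := fun k => (σ t).symm (σ (t+1) (Fin.castLE hm k)) with hqdef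
      have hqinj : Function.Injective q := by
        intro k1 k2 h
        rw [hqdef] at h
        simp only at h
        exact Fin.castLE_injective hm ((σ (t+1)).injective ((σ t).symm.injective h))
      have hrow' : ∀ i, ∑ j, a t (σ t i) (σ t j) = 1 := by
        intro i
        rw [Equiv.sum_comp (σ t) (fun j => a t (σ t i) j)]
        exact harow t (σ t i)
      have hy' : ∀ i, y (t+1) (σ t i) = ∑ j, a t (σ t i) (σ t j) * ζ t j := by
        intro i
        rw [hyupd' t (σ t i)]
        rw [← Equiv.sum_comp (σ t) (fun j => a t (σ t i) j * y t j)]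
      have hmaster := bms_master (fun i j => a t (σ t i) (σ t j)) (ζ t)
        (fun i => y (t+1) (σ t i)) hdl0 hK1 hRdef
        (fun i j => ha0 t _ _) hrow'
        (fun i => hdiag t (σ t i)) (fun i j => hsym t (σ t i) (σ t j))
        (hζmono t) hy' hm q hqinj
      have hL : ∑ k : Fin m, (R⁻¹)^((k:ℕ)+1) * ζ t (Fin.castLE hm k) = V m t := by
        rw [hVdef]
        exact sum_fin_cast hm (fun r => (R⁻¹)^((r:ℕ)+1) * ζ t r)
      have hRr : ∑ k : Fin m, (R⁻¹)^((k:ℕ)+1) * y (t+1) (σ t (q k)) = V m (t+1) := by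
        have he : ∀ k : Fin m, y (t+1) (σ t (q k)) = ζ (t+1) (Fin.castLE hm k) := by
          intro k
          rw [hqdef, hζdef]
          simp only
          rw [Equiv.apply_symm_apply]
        rw [Finset.sum_congr rfl (fun k _ => by rw [he k]), hVdef]
        exact sum_fin_cast hm (fun r => (R⁻¹)^((r:ℕ)+1) * ζ (t+1) r)
      rw [← hL, ← hRr]
      exact hmaster
    have hVbdd : ∀ m t, V m t ≤ (N:ℝ) * C := by
      intro m t
      rw [hVdef]
      calc ∑ r ∈ univ.filter (fun r : Fin N => (r:ℕ) < m), (R⁻¹)^((r:ℕ)+1) * ζ t r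
          ≤ ∑ r ∈ univ.filter (fun r : Fin N => (r:ℕ) < m), C := by
            apply Finset.sum_le_sum
            intro r _
            calc (R⁻¹)^((r:ℕ)+1) * ζ t r ≤ |(R⁻¹)^((r:ℕ)+1) * ζ t r| := le_abs_self _
              _ = (R⁻¹)^((r:ℕ)+1) * |ζ t r| := by
                  rw [abs_mul, abs_of_nonneg (by positivity)]
              _ ≤ 1 * C := by
                  apply mul_le_mul (pow_le_one₀ hr01.le hrle1) (hbound t _) (abs_nonneg _) one_pos.le
              _ = C := one_mul _
        _ ≤ ∑ _r ∈ (univ : Finset (Fin N)), C :=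
            Finset.sum_le_sum_of_subset_of_nonneg (Finset.filter_subset _ _)
              (fun _ _ _ => hC0)
        _ = (N:ℝ) * C := by
            rw [Finset.sum_const, Finset.card_univ, Fintype.card_fin, nsmul_eq_mul]
    have hVlim : ∀ m, m ≤ N → ∃ Lv, Tendsto (fun t => V m t) atTop (nhds Lv) := by
      intro m hm
      have hmono' : Monotone (fun t => V m t) := monotone_nat_of_le_succ (hVmono m hm)
      have hbdd : BddAbove (Set.range (fun t => V m t)) := by
        refine ⟨(N:ℝ) * C, ?_⟩
        rintro v ⟨t, rfl⟩
        exact hVbdd m t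
      exact ⟨_, tendsto_atTop_ciSup hmono' hbdd⟩
    -- sorted values converge
    have hζconv : ∀ r : Fin N, ∃ Lr, Tendsto (fun t => ζ t r) atTop (nhds Lr) := by
      intro r
      obtain ⟨L1, hL1⟩ := hVlim ((r:ℕ)+1) r.isLt
      obtain ⟨L0, hL0⟩ := hVlim (r:ℕ) (le_of_lt r.isLt)
      have hsplit : ∀ t, V ((r:ℕ)+1) t = V (r:ℕ) t + (R⁻¹)^((r:ℕ)+1) * ζ t r := by
        intro t
        simp only [hVdef]
        have hins : univ.filter (fun s : Fin N => (s:ℕ) < (r:ℕ)+1)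
            = insert r (univ.filter (fun s : Fin N => (s:ℕ) < (r:ℕ))) := by
          ext s
          simp only [mem_filter, mem_univ, true_and, mem_insert]
          rw [Fin.ext_iff]
          omega
        rw [hins, Finset.sum_insert (by simp only [mem_filter, mem_univ, true_and]; omega)]
        ring
      have h1 : Tendsto (fun t => (V ((r:ℕ)+1) t - V (r:ℕ) t) * R^((r:ℕ)+1)) atTop
          (nhds ((L1 - L0) * R^((r:ℕ)+1))) := (hL1.sub hL0).mul_const _
      refine ⟨(L1 - L0) * R^((r:ℕ)+1), ?_⟩
      have h2 : (fun t => (V ((r:ℕ)+1) t - V (r:ℕ) t) * R^((r:ℕ)+1)) = fun t => ζ t r := by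
        funext t
        rw [hsplit t]
        have h3 : (R⁻¹)^((r:ℕ)+1) * R^((r:ℕ)+1) = 1 := by
          rw [← mul_pow, inv_mul_cancel₀ (ne_of_gt hR0), one_pow]
        calc (V (r:ℕ) t + (R⁻¹)^((r:ℕ)+1) * ζ t r - V (r:ℕ) t) * R^((r:ℕ)+1)
            = ζ t r * ((R⁻¹)^((r:ℕ)+1) * R^((r:ℕ)+1)) := by ring
          _ = ζ t r := by rw [h3, mul_one]
      rwa [h2] at h1
    choose L hL using hζconv
    -- gap constant
    obtain ⟨e0, he00, he0⟩ : ∃ e0 : ℝ, 0 < e0 ∧ ∀ r s : Fin N, L r ≠ L s → e0 ≤ |L r - L s| := by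
      set P := (univ ×ˢ univ : Finset (Fin N × Fin N)).filter (fun rs => L rs.1 ≠ L rs.2) with hP
      rcases P.eq_empty_or_nonempty with hPe | hPne
      · refine ⟨1, one_pos, fun r s hrs => ?_⟩
        exfalso
        have : (r, s) ∈ P := by
          rw [hP, mem_filter]
          exact ⟨Finset.mem_product.mpr ⟨mem_univ _, mem_univ _⟩, hrs⟩
        rw [hPe] at this
        exact absurd this (Finset.notMem_empty _)
      · refine ⟨P.inf' hPne (fun rs => |L rs.1 - L rs.2|), ?_, ?_⟩
        · rw [Finset.lt_inf'_iff]
          intro rs hrs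
          rw [hP, mem_filter] at hrs
          exact abs_pos.mpr (sub_ne_zero.mpr hrs.2)
        · intro r s hrs
          have hmem : (r, s) ∈ P := by
            rw [hP, mem_filter]
            exact ⟨Finset.mem_product.mpr ⟨mem_univ _, mem_univ _⟩, hrs⟩
          exact Finset.inf'_le (fun rs => |L rs.1 - L rs.2|) hmem
    -- Cauchy sequence
    have hcauchy : CauchySeq (fun t => y t i0) := by
      rw [Metric.cauchySeq_iff']
      intro ε hε
      set ee : ℝ := min (ε/2) (e0/5) with heedef
      have hee0 : 0 < ee := lt_min (by linarith) (by linarith)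
      have h1 : ∀ᶠ t in atTop, ∀ r, |ζ t r - L r| < ee/2 := by
        apply eventually_all.mpr
        intro r
        have := Metric.tendsto_nhds.mp (hL r) (ee/2) (by linarith)
        apply this.mono
        intro t ht
        rwa [Real.dist_eq] at ht
      have h2 : ∀ᶠ t in atTop, |y (t+1) i0 - y t i0| < ee/2 := by
        have h3 := Metric.tendsto_nhds.mp hstep0 (ee/2) (by linarith)
        apply h3.mono
        intro t ht
        rw [Real.dist_eq, sub_zero, abs_of_nonneg (norm_nonneg _)] at ht
        calc |y (t+1) i0 - y t i0| = |(x (t+1) i0 - x t i0) l| := rfl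
          _ ≤ ‖x (t+1) i0 - x t i0‖ := coord_le_norm _ l
          _ < ee/2 := ht
      obtain ⟨T, hT⟩ := eventually_atTop.mp (h1.and h2)
      refine ⟨T, ?_⟩
      have hyζ : ∀ t, y t i0 = ζ t ((σ t).symm i0) := by
        intro t
        rw [hζdef]
        simp only
        rw [Equiv.apply_symm_apply]
      have hclose : ∀ t, T ≤ t → |y t i0 - L ((σ t).symm i0)| < ee/2 := by
        intro t ht
        rw [hyζ t]
        exact (hT t ht).1 _
      have hstab : ∀ t, T ≤ t → L ((σ t).symm i0) = L ((σ T).symm i0) := by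
        intro t ht
        induction t, ht using Nat.le_induction with
        | base => rfl
        | succ t ht ih =>
          rw [← ih]
          by_contra hne'
          have h4 := he0 _ _ hne'
          have h5 := hclose (t+1) (by omega)
          have h6 := hclose t ht
          have h7 := (hT t ht).2
          have h8 : |L ((σ (t+1)).symm i0) - L ((σ t).symm i0)| < 3 * (ee/2) := by
            calc |L ((σ (t+1)).symm i0) - L ((σ t).symm i0)|
                ≤ |L ((σ (t+1)).symm i0) - y (t+1) i0| + |y (t+1) i0 - L ((σ t).symm i0)| :=
                  abs_sub_le _ _ _
              _ ≤ |L ((σ (t+1)).symm i0) - y (t+1) i0| + (|y (t+1) i0 - y t i0|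
                  + |y t i0 - L ((σ t).symm i0)|) := by
                  have := abs_sub_le (y (t+1) i0) (y t i0) (L ((σ t).symm i0))
                  linarith
              _ < 3 * (ee/2) := by
                  rw [abs_sub_comm (L ((σ (t+1)).symm i0)) (y (t+1) i0)]
                  linarith
          have h9 : ee ≤ e0/5 := min_le_right _ _
          linarith
      intro n hn
      rw [Real.dist_eq]
      have h10 := hclose n hn
      have h11 := hclose T le_rfl
      rw [hstab n hn] at h10
      have h12 : ee ≤ ε/2 := min_le_left _ _
      calc |y n i0 - y T i0|
          ≤ |y n i0 - L ((σ T).symm i0)| + |L ((σ T).symm i0) - y T i0| := abs_sub_le _ _ _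
        _ < ee/2 + ee/2 := by rw [abs_sub_comm (L ((σ T).symm i0)) (y T i0)]; linarith
        _ ≤ ε/2 + ε/2 := by linarith
        _ ≤ ε := by linarith
    obtain ⟨cl, hcl⟩ := cauchySeq_tendsto_of_complete hcauchy
    exact ⟨cl, hcl⟩
  choose cv hcv using hcoord
  set Φ := PiLp.continuousLinearEquiv 2 ℝ (fun _ : Fin p => ℝ) with hΦ
  refine ⟨Φ.symm cv, ?_⟩
  have h1 : Tendsto (fun t => Φ (x t i0)) atTop (nhds cv) := by
    rw [tendsto_pi_nhds]
    intro l
    exact hcv l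
  have h2 := (Φ.symm.continuous.tendsto cv).comp h1
  have h3 : (⇑Φ.symm ∘ fun t => Φ (x t i0)) = fun t => x t i0 := by
    funext t
    exact ContinuousLinearEquiv.symm_apply_apply Φ (x t i0)
  rwa [h3] at h2
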